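/- arXiv:0707.3886 — 4 statements merged into one kernel-verified Lean document; each statement's English description precedes it below -/
import Mathlib

section
/- Let y : (0,∞) → (0,∞) be a function satisfying the doubling property: for all θ > 1 and r > 0, (3θ²)⁻¹ y(r) ≤ y(θr) ≤ 2 y(r). Define I(r) = r⁻¹ ∫₀^r y(x)⁻¹ dx and ẏ(r) = I(r)⁻¹. Then for all r > 0, 48⁻¹ ≤ y(r)/ẏ(r) ≤ 2. -/
open MeasureTheory intervalIntegral Set

/-- If `y : (0,∞) → (0,∞)` satisfies the doubling property
`(3θ²)⁻¹ y(r) ≤ y(θr) ≤ 2 y(r)`, then with `I(r) = r⁻¹ ∫₀^r y(x)⁻¹ dx` and `ẏ(r) = I(r)⁻¹`,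
one has `48⁻¹ ≤ y(r)/ẏ(r) ≤ 2` for all `r > 0`. -/
theorem ratio_bound_of_doubling
    (y : ℝ → ℝ) (hypos : ∀ r > 0, 0 < y r) (hmeas : Measurable y)
    (hint : ∀ r > 0, IntervalIntegrable (fun x => (y x)⁻¹) MeasureTheory.volume 0 r)
    (hdoub : ∀ θ : ℝ, 1 < θ → ∀ r > 0,
      (3 * θ ^ 2)⁻¹ * y r ≤ y (θ * r) ∧ y (θ * r) ≤ 2 * y r) :
    ∀ r > 0,
      (48 : ℝ)⁻¹ ≤ y r / (r⁻¹ * ∫ x in (0 : ℝ)..r, (y x)⁻¹)⁻¹ ∧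
      y r / (r⁻¹ * ∫ x in (0 : ℝ)..r, (y x)⁻¹)⁻¹ ≤ 2 := by
  intro r hr
  have hyr := hypos r hr
  set c := ∫ x in (0:ℝ)..r, (y x)⁻¹ with hc
  -- a.e. facts
  have haeset : ∀ᵐ x ∂(volume.restrict (Icc (0:ℝ) r)), x ∈ Ioo (0:ℝ) r ∨ x = 0 ∨ x = r := by
    filter_upwards [ae_restrict_mem measurableSet_Icc] with x hx
    rcases eq_or_ne x 0 with h0 | h0
    · exact Or.inr (Or.inl h0)
    rcases eq_or_ne x r with h1 | h1
    · exact Or.inr (Or.inr h1)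
    exact Or.inl ⟨lt_of_le_of_ne hx.1 (Ne.symm h0), lt_of_le_of_ne hx.2 h1⟩
  have hedge : ∀ᵐ x ∂(volume.restrict (Icc (0:ℝ) r)), x ≠ 0 ∧ x ≠ r := by
    refine ae_restrict_of_ae ?_
    have h0 : (volume ({0, r} : Set ℝ)) = 0 :=
      (Set.toFinite ({0, r} : Set ℝ)).measure_zero volume
    filter_upwards [measure_eq_zero_iff_ae_notMem.mp h0] with x hx
    simp only [mem_insert_iff, mem_singleton_iff, not_or] at hx
    exact hx
  have hpt : ∀ x ∈ Ioo (0:ℝ) r, x ^ 2 / (3 * r ^ 2 * y r) ≤ (y x)⁻¹ ∧ (y x)⁻¹ ≤ 2 / y r := by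
    intro x hx
    have hx0 := hx.1
    have hyx := hypos x hx0
    have hθ : (1:ℝ) < r / x := (one_lt_div hx0).mpr hx.2
    have hd := hdoub (r / x) hθ x hx0
    rw [div_mul_cancel₀ _ (ne_of_gt hx0)] at hd
    constructor
    · have h1 : y x ≤ 3 * (r / x) ^ 2 * y r := by
        have := hd.1
        rw [inv_mul_le_iff₀ (by positivity)] at this
        linarith
      have h2 : (3 * (r / x) ^ 2 * y r)⁻¹ ≤ (y x)⁻¹ :=
        inv_anti₀ hyx h1
      calc x ^ 2 / (3 * r ^ 2 * y r) = (3 * (r / x) ^ 2 * y r)⁻¹ := by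
            field_simp
        _ ≤ (y x)⁻¹ := h2
    · have h1 : y r / 2 ≤ y x := by linarith [hd.2]
      calc (y x)⁻¹ ≤ (y r / 2)⁻¹ := inv_anti₀ (by positivity) h1
        _ = 2 / y r := by rw [inv_div]
  -- integrability of bounds
  have hcont1 : IntervalIntegrable (fun x : ℝ => x ^ 2 / (3 * r ^ 2 * y r)) volume 0 r :=
    (Continuous.intervalIntegrable (by continuity) _ _)
  have hcont2 : IntervalIntegrable (fun _ : ℝ => 2 / y r) volume 0 r :=
    intervalIntegrable_const
  have hae_lo : (fun x : ℝ => x ^ 2 / (3 * r ^ 2 * y r)) ≤ᵐ[volume.restrict (Icc (0:ℝ) r)]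
      fun x => (y x)⁻¹ := by
    filter_upwards [haeset, hedge] with x hx he
    rcases hx with h | h | h
    · exact (hpt x h).1
    · exact absurd h he.1
    · exact absurd h he.2
  have hae_hi : (fun x : ℝ => (y x)⁻¹) ≤ᵐ[volume.restrict (Icc (0:ℝ) r)]
      fun _ => 2 / y r := by
    filter_upwards [haeset, hedge] with x hx he
    rcases hx with h | h | h
    · exact (hpt x h).2
    · exact absurd h he.1
    · exact absurd h he.2
  have hlow : r / (9 * y r) ≤ c := by
    have := intervalIntegral.integral_mono_ae_restrict hr.le hcont1 (hint r hr) hae_lo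
    have hval : (∫ x in (0:ℝ)..r, x ^ 2 / (3 * r ^ 2 * y r)) = r / (9 * y r) := by
      rw [intervalIntegral.integral_div, integral_pow]
      field_simp
      ring
    rw [hval] at this
    exact this
  have hup : c ≤ 2 * r / y r := by
    have := intervalIntegral.integral_mono_ae_restrict hr.le (hint r hr) hcont2 hae_hi
    simpa [mul_comm, mul_div_assoc, div_mul_eq_mul_div] using this
  have hcpos : 0 < c := lt_of_lt_of_le (by positivity) hlow
  have key : y r / (r⁻¹ * c)⁻¹ = y r * (r⁻¹ * c) := by
    rw [div_eq_mul_inv, inv_inv]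
  rw [key]
  constructor
  · have : (1:ℝ)/9 ≤ y r * (r⁻¹ * c) := by
      have h1 : y r * (r⁻¹ * (r / (9 * y r))) ≤ y r * (r⁻¹ * c) := by
        have : r⁻¹ * (r / (9 * y r)) ≤ r⁻¹ * c := by
          exact mul_le_mul_of_nonneg_left hlow (by positivity)
        exact mul_le_mul_of_nonneg_left this hyr.le
      have h2 : y r * (r⁻¹ * (r / (9 * y r))) = 1/9 := by field_simp
      linarith
    linarith [this]
  · have h1 : y r * (r⁻¹ * c) ≤ y r * (r⁻¹ * (2 * r / y r)) :=
      mul_le_mul_of_nonneg_left (mul_le_mul_of_nonneg_left hup (by positivity)) hyr.le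
    have h2 : y r * (r⁻¹ * (2 * r / y r)) = 2 := by field_simp
    linarith
end

section
/- Under the hypotheses of the previous statement (y satisfies the doubling property (3θ²)⁻¹ y(r) ≤ y(θr) ≤ 2 y(r) and ẏ(r) = (r⁻¹∫₀^r y(x)⁻¹dx)⁻¹), for all θ > 1 and r > 0: (1/288)·θ⁻² ẏ(r) ≤ ẏ(θr) ≤ 192 ẏ(r). -/
/-- Under the doubling hypotheses on `y`, the regularized function
`ẏ(r) = (r⁻¹ ∫₀^r y(x)⁻¹ dx)⁻¹` satisfies `(1/288)·θ⁻² ẏ(r) ≤ ẏ(θr) ≤ 192 ẏ(r)`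
for all `θ > 1` and `r > 0`. -/
theorem regularized_doubling
    (y : ℝ → ℝ) (hypos : ∀ r > 0, 0 < y r) (hmeas : Measurable y)
    (hint : ∀ r > 0, IntervalIntegrable (fun x => (y x)⁻¹) MeasureTheory.volume 0 r)
    (hdoub : ∀ θ : ℝ, 1 < θ → ∀ r > 0,
      (3 * θ ^ 2)⁻¹ * y r ≤ y (θ * r) ∧ y (θ * r) ≤ 2 * y r) :
    ∀ θ : ℝ, 1 < θ → ∀ r > 0,
      (1 / 288 : ℝ) * θ⁻¹ ^ 2 * (r⁻¹ * ∫ x in (0 : ℝ)..r, (y x)⁻¹)⁻¹ ≤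
        ((θ * r)⁻¹ * ∫ x in (0 : ℝ)..(θ * r), (y x)⁻¹)⁻¹ ∧
      ((θ * r)⁻¹ * ∫ x in (0 : ℝ)..(θ * r), (y x)⁻¹)⁻¹ ≤
        192 * (r⁻¹ * ∫ x in (0 : ℝ)..r, (y x)⁻¹)⁻¹ := by
  intro θ hθ r hr
  have hθ0 : (0:ℝ) < θ := by linarith
  have hθr : 0 < θ * r := by positivity
  set A : ℝ := ∫ x in (0:ℝ)..r, (y x)⁻¹ with hA
  set B : ℝ := ∫ x in (0:ℝ)..(θ * r), (y x)⁻¹ with hB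
  have hApos : 0 < A := by
    refine intervalIntegral.intervalIntegral_pos_of_pos_on (hint r hr) ?_ hr
    intro x hx
    exact inv_pos.mpr (hypos x hx.1)
  have hBpos : 0 < B := by
    refine intervalIntegral.intervalIntegral_pos_of_pos_on (hint _ hθr) ?_ hθr
    intro x hx
    exact inv_pos.mpr (hypos x hx.1)
  -- integrability of x ↦ (y (θ x))⁻¹ on [0, r]
  have hint2 : IntervalIntegrable (fun x => (y (θ * x))⁻¹) MeasureTheory.volume 0 r := by
    have := (hint _ hθr).comp_mul_left (c := θ)
    simpa [zero_div, mul_div_assoc, mul_div_cancel_left₀ _ (ne_of_gt hθ0)] using this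
  -- B = θ * ∫₀^r (y (θ x))⁻¹
  have hsub : B = θ * ∫ x in (0:ℝ)..r, (y (θ * x))⁻¹ := by
    rw [hB, intervalIntegral.integral_comp_mul_left (f := fun x => (y x)⁻¹) (ne_of_gt hθ0)]
    rw [mul_zero, smul_eq_mul]
    field_simp
  have hae : ∀ᵐ x : ℝ, x ≠ 0 := by
    rw [MeasureTheory.ae_iff]
    have : {x : ℝ | ¬ x ≠ 0} = {0} := by ext x; simp
    rw [this]
    exact Real.volume_singleton
  -- upper bound for the substituted integral
  have hup : (∫ x in (0:ℝ)..r, (y (θ * x))⁻¹) ≤ 3 * θ ^ 2 * A := by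
    have h3 : (3 * θ ^ 2 * A) = ∫ x in (0:ℝ)..r, 3 * θ ^ 2 * (y x)⁻¹ := by
      rw [intervalIntegral.integral_const_mul]
    rw [h3]
    refine intervalIntegral.integral_mono_ae_restrict (le_of_lt hr) hint2
      ((hint r hr).const_mul _) ?_
    rw [Filter.EventuallyLE, MeasureTheory.ae_restrict_iff' measurableSet_Icc]
    filter_upwards [hae] with x hx hmem
    rcases lt_or_eq_of_le hmem.1 with hx0 | hx0
    · have hyx := hypos x hx0
      have hd := (hdoub θ hθ x hx0).1
      have hpos : 0 < (3 * θ ^ 2)⁻¹ * y x := by positivity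
      calc (y (θ * x))⁻¹ ≤ ((3 * θ ^ 2)⁻¹ * y x)⁻¹ := by
            exact inv_anti₀ hpos hd
        _ = 3 * θ ^ 2 * (y x)⁻¹ := by rw [mul_inv, inv_inv]
    · exact absurd hx0.symm hx
  -- lower bound for the substituted integral
  have hlow : (2:ℝ)⁻¹ * A ≤ ∫ x in (0:ℝ)..r, (y (θ * x))⁻¹ := by
    have h2 : ((2:ℝ)⁻¹ * A) = ∫ x in (0:ℝ)..r, (2:ℝ)⁻¹ * (y x)⁻¹ := by
      rw [intervalIntegral.integral_const_mul]
    rw [h2]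
    refine intervalIntegral.integral_mono_ae_restrict (le_of_lt hr)
      ((hint r hr).const_mul _) hint2 ?_
    rw [Filter.EventuallyLE, MeasureTheory.ae_restrict_iff' measurableSet_Icc]
    filter_upwards [hae] with x hx hmem
    rcases lt_or_eq_of_le hmem.1 with hx0 | hx0
    · have hyx := hypos x hx0
      have hd := (hdoub θ hθ x hx0).2
      have hdl := (hdoub θ hθ x hx0).1
      have hpos : 0 < y (θ * x) := lt_of_lt_of_le (by positivity) hdl
      calc (2:ℝ)⁻¹ * (y x)⁻¹ = (2 * y x)⁻¹ := by rw [mul_inv]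
        _ ≤ (y (θ * x))⁻¹ := inv_anti₀ hpos hd
    · exact absurd hx0.symm hx
  have hBub : B ≤ 3 * θ ^ 3 * A := by
    rw [hsub]
    calc θ * ∫ x in (0:ℝ)..r, (y (θ * x))⁻¹ ≤ θ * (3 * θ ^ 2 * A) := by
          exact mul_le_mul_of_nonneg_left hup (le_of_lt hθ0)
      _ = 3 * θ ^ 3 * A := by ring
  have hBlb : θ / 2 * A ≤ B := by
    rw [hsub]
    calc θ / 2 * A = θ * ((2:ℝ)⁻¹ * A) := by ring
      _ ≤ θ * ∫ x in (0:ℝ)..r, (y (θ * x))⁻¹ :=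
          mul_le_mul_of_nonneg_left hlow (le_of_lt hθ0)
  constructor
  · rw [mul_inv, inv_inv, mul_inv, inv_inv, ← div_eq_mul_inv, ← div_eq_mul_inv]
    have hlhs : (1 / 288 : ℝ) * θ⁻¹ ^ 2 * (r / A) = r / (288 * θ ^ 2 * A) := by
      field_simp
    rw [hlhs, div_le_div_iff₀ (by positivity) hBpos]
    nlinarith [mul_pos hApos hr, mul_pos hθ0 (mul_pos hApos hr)]
  · rw [mul_inv, inv_inv, mul_inv, inv_inv, ← div_eq_mul_inv, ← div_eq_mul_inv,
      div_le_iff₀ hBpos]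
    have h1 : 192 * (r / A) * (θ / 2 * A) ≤ 192 * (r / A) * B :=
      mul_le_mul_of_nonneg_left hBlb (by positivity)
    have h2 : 192 * (r / A) * (θ / 2 * A) = 96 * θ * r := by
      field_simp
      ring
    nlinarith [mul_pos hθ0 hr]
end

section
/- Suppose e is a moderate function with e(t₂)/e(t₁) ≤ ρ(t₂/t₁)^σ for 0 < t₁ < t₂, and y : [0,∞) → [0,∞) is nondecreasing continuous with y(n) = m for some n > 0, m > 0. Suppose a random variable T satisfies P(T ≥ t) ≤ A·y(t)^{-k/2} for all t > 0, where k is an integer with k > 2σ. Then E[e(y(T))] ≤ e(m)(1 + C'/δ) where δ = k/(2σ) − 1 and C' = A ρ^{1+δ} m^{-k/2}. -/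
open MeasureTheory

/-- If `e` is moderate with constants `(ρ, σ)`, `y` is nondecreasing continuous with `y(n) = m`,
and `T ≥ 0` satisfies the tail bound `P(T ≥ t) ≤ A·y(t)^{-k/2}` with `k > 2σ`, then
`E[e(y(T))] ≤ e(m)(1 + C'/δ)` where `δ = k/(2σ) − 1` and `C' = A ρ^{1+δ} m^{-k/2}`. -/
theorem expectation_bound_of_tail
    {Ω : Type*} [MeasurableSpace Ω] (P : Measure Ω) [IsProbabilityMeasure P]
    (ρ σ : ℝ) (hρ : 0 < ρ) (hσ : 0 < σ)
    (e : ℝ → ℝ) (he_mono : Monotone e) (he_pos : ∀ t > 0, 0 < e t)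
    (he_mod : ∀ t₁ t₂ : ℝ, 0 < t₁ → t₁ < t₂ → e t₂ / e t₁ ≤ ρ * (t₂ / t₁) ^ σ)
    (y : ℝ → ℝ) (hy_mono : Monotone y) (hy_cont : Continuous y)
    (hy0 : y 0 = 0) (hy_pos : ∀ t > 0, 0 < y t)
    (n m : ℝ) (hn : 0 < n) (hm : 0 < m) (hym : y n = m)
    (k : ℕ) (hk : 2 * σ < (k : ℝ))
    (A : ℝ) (hA : 0 ≤ A)
    (T : Ω → ℝ) (hT_meas : Measurable T) (hT_nonneg : ∀ ω, 0 ≤ T ω)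
    (htail : ∀ t : ℝ, 0 < t → (P {ω | t ≤ T ω}).toReal ≤ A * (y t) ^ (-(k : ℝ) / 2)) :
    ∫⁻ ω, ENNReal.ofReal (e (y (T ω))) ∂P ≤
      ENNReal.ofReal (e m * (1 +
        (A * ρ ^ (1 + ((k : ℝ) / (2 * σ) - 1)) * m ^ (-(k : ℝ) / 2)) /
          ((k : ℝ) / (2 * σ) - 1))) := by
  have hem : 0 < e m := he_pos m hm
  set δ : ℝ := (k : ℝ) / (2 * σ) - 1 with hδdef
  have h2σ : (0:ℝ) < 2 * σ := by linarith
  have hδ : 0 < δ := by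
    rw [hδdef, sub_pos, lt_div_iff₀ h2σ]; linarith
  have h1δ : 1 + δ = (k : ℝ) / (2 * σ) := by rw [hδdef]; ring
  set C : ℝ := A * ρ ^ (1 + δ) * m ^ (-(k : ℝ) / 2) with hCdef
  have hC : 0 ≤ C := by positivity
  -- Step 1: tail bound for y ∘ T
  have tail_y : ∀ c : ℝ, 0 < c →
      (P {ω | c ≤ y (T ω)}).toReal ≤ A * c ^ (-(k : ℝ) / 2) := by
    intro c hc
    by_cases hex : ∃ t, c ≤ y t
    · obtain ⟨t₀, ht₀⟩ := hex
      have ht₀pos : 0 < t₀ := by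
        by_contra h
        push_neg at h
        have : y t₀ ≤ 0 := hy0 ▸ hy_mono h
        linarith
      have key : ∀ b ∈ Set.Ioo (0:ℝ) c,
          (P {ω | c ≤ y (T ω)}).toReal ≤ A * b ^ (-(k : ℝ) / 2) := by
        intro b hb
        have hbmem : b ∈ Set.Icc (y 0) (y t₀) := by
          constructor
          · rw [hy0]; exact hb.1.le
          · exact le_trans hb.2.le ht₀
        obtain ⟨t, _, hyt⟩ := intermediate_value_Icc ht₀pos.le hy_cont.continuousOn hbmem
        have htpos : 0 < t := by
          by_contra h
          push_neg at h
          have : y t ≤ 0 := hy0 ▸ hy_mono h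
          rw [hyt] at this; linarith [hb.1]
        have hsub : {ω | c ≤ y (T ω)} ⊆ {ω | t ≤ T ω} := by
          intro ω hω
          simp only [Set.mem_setOf_eq] at hω ⊢
          by_contra h
          push_neg at h
          have : y (T ω) ≤ y t := hy_mono h.le
          rw [hyt] at this
          linarith [hb.2]
        calc (P {ω | c ≤ y (T ω)}).toReal
            ≤ (P {ω | t ≤ T ω}).toReal :=
              ENNReal.toReal_mono (measure_ne_top P _) (measure_mono hsub)
          _ ≤ A * (y t) ^ (-(k : ℝ) / 2) := htail t htpos
          _ = A * b ^ (-(k : ℝ) / 2) := by rw [hyt]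
      have hcont : Filter.Tendsto (fun b : ℝ => A * b ^ (-(k : ℝ) / 2))
          (nhdsWithin c (Set.Iio c)) (nhds (A * c ^ (-(k : ℝ) / 2))) := by
        apply Filter.Tendsto.mono_left _ nhdsWithin_le_nhds
        exact Filter.Tendsto.const_mul A
          (Real.continuousAt_rpow_const c _ (Or.inl hc.ne')).tendsto
      refine ge_of_tendsto hcont ?_
      filter_upwards [Ioo_mem_nhdsLT_of_mem (Set.mem_Ioc.mpr ⟨hc, le_refl c⟩)] with b hb
      exact key b hb
    · push_neg at hex
      have hemp : {ω | c ≤ y (T ω)} = ∅ := by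
        ext ω
        simp only [Set.mem_setOf_eq, Set.mem_empty_iff_false, iff_false, not_le]
        exact hex (T ω)
      rw [hemp]
      simp only [measure_empty, ENNReal.toReal_zero]
      positivity
  -- Step 2: tail bound for e ∘ y ∘ T
  have tail_f : ∀ t : ℝ, e m < t →
      (P {ω | t < e (y (T ω))}).toReal ≤ C * (e m) ^ (1 + δ) * t ^ (-(1 + δ)) := by
    intro t ht
    have htpos : 0 < t := lt_trans hem ht
    set B : ℝ := ρ * e m with hBdef
    have hB : 0 < B := mul_pos hρ hem
    have hquot : 0 < t / B := div_pos htpos hB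
    set c : ℝ := m * (t / B) ^ (1 / σ) with hcdef
    have hcpos : 0 < c := mul_pos hm (Real.rpow_pos_of_pos hquot _)
    have hsub : {ω | t < e (y (T ω))} ⊆ {ω | c ≤ y (T ω)} := by
      intro ω hω
      simp only [Set.mem_setOf_eq] at hω ⊢
      have hfω : e m < e (y (T ω)) := lt_trans ht hω
      have hym' : m < y (T ω) := by
        by_contra h
        push_neg at h
        exact absurd (he_mono h) (not_le.mpr hfω)
      have hmod := he_mod m (y (T ω)) hm hym'
      have h1 : t / e m < ρ * (y (T ω) / m) ^ σ :=
        lt_of_lt_of_le ((div_lt_div_iff_of_pos_right hem).mpr hω) hmod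
      have h2 : t / B < (y (T ω) / m) ^ σ := by
        rw [hBdef, mul_comm ρ (e m), ← div_div]
        exact (div_lt_iff₀' hρ).mpr h1
      have h3 : (t / B) ^ (1 / σ) < y (T ω) / m := by
        have hstep := Real.rpow_lt_rpow hquot.le h2 (one_div_pos.mpr hσ)
        rw [one_div]
        rwa [one_div, Real.rpow_rpow_inv (div_nonneg (le_trans hm.le hym'.le) hm.le)
          hσ.ne'] at hstep
      rw [hcdef]
      calc m * (t / B) ^ (1 / σ) ≤ m * (y (T ω) / m) :=
            mul_le_mul_of_nonneg_left h3.le hm.le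
        _ = y (T ω) := by field_simp
    have halg : A * c ^ (-(k : ℝ) / 2) = C * (e m) ^ (1 + δ) * t ^ (-(1 + δ)) := by
      have hexp : (1 / σ) * (-(k : ℝ) / 2) = -(1 + δ) := by
        rw [h1δ]
        field_simp
        try ring
        try exact Or.inl trivial
      have e1 : c ^ (-(k : ℝ) / 2) = m ^ (-(k : ℝ) / 2) * (t / B) ^ (-(1 + δ)) := by
        rw [hcdef, Real.mul_rpow hm.le (Real.rpow_pos_of_pos hquot _).le,
          ← Real.rpow_mul hquot.le, hexp]
      have e2 : (t / B) ^ (-(1 + δ)) = B ^ (1 + δ) * t ^ (-(1 + δ)) := by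
        rw [Real.rpow_neg hquot.le, Real.div_rpow htpos.le hB.le, inv_div,
          Real.rpow_neg htpos.le, div_eq_mul_inv]
      rw [e1, e2, hBdef, Real.mul_rpow hρ.le hem.le, hCdef]; ring
    calc (P {ω | t < e (y (T ω))}).toReal
        ≤ (P {ω | c ≤ y (T ω)}).toReal :=
          ENNReal.toReal_mono (measure_ne_top P _) (measure_mono hsub)
      _ ≤ A * c ^ (-(k : ℝ) / 2) := tail_y c hcpos
      _ = _ := halg
  -- Step 3: layer cake and integration
  have hf_meas : Measurable fun ω => e (y (T ω)) :=
    he_mono.measurable.comp (hy_cont.measurable.comp hT_meas)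
  set g : Ω → ℝ := fun ω => max (e (y (T ω))) 0 with hgdef
  have hg_meas : Measurable g := hf_meas.max measurable_const
  have hof : ∀ ω, ENNReal.ofReal (e (y (T ω))) = ENNReal.ofReal (g ω) := by
    intro ω
    rcases le_total 0 (e (y (T ω))) with h | h
    · rw [hgdef]; simp [max_eq_left h]
    · rw [hgdef]; simp [max_eq_right h, ENNReal.ofReal_of_nonpos h]
  have layer : ∫⁻ ω, ENNReal.ofReal (g ω) ∂P = ∫⁻ t in Set.Ioi 0, P {ω | t < g ω} :=
    lintegral_eq_lintegral_meas_lt P (ae_of_all _ fun ω => le_max_right _ _)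
      hg_meas.aemeasurable
  have hsplit : ∫⁻ t in Set.Ioi 0, P {ω | t < g ω}
      = (∫⁻ t in Set.Ioc 0 (e m), P {ω | t < g ω})
        + ∫⁻ t in Set.Ioi (e m), P {ω | t < g ω} := by
    rw [← lintegral_union measurableSet_Ioi (Set.Ioc_disjoint_Ioi le_rfl),
      Set.Ioc_union_Ioi_eq_Ioi hem.le]
  have hb1 : ∫⁻ t in Set.Ioc 0 (e m), P {ω | t < g ω} ≤ ENNReal.ofReal (e m) := by
    calc ∫⁻ t in Set.Ioc 0 (e m), P {ω | t < g ω}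
        ≤ ∫⁻ _t in Set.Ioc 0 (e m), 1 := lintegral_mono fun t => prob_le_one
      _ = ENNReal.ofReal (e m) := by
          rw [setLIntegral_one, Real.volume_Ioc, sub_zero]
  have hb2 : ∫⁻ t in Set.Ioi (e m), P {ω | t < g ω}
      ≤ ENNReal.ofReal (e m * (C / δ)) := by
    have step : ∀ t ∈ Set.Ioi (e m),
        P {ω | t < g ω} ≤ ENNReal.ofReal (C * (e m) ^ (1 + δ) * t ^ (-(1 + δ))) := by
      intro t ht
      have ht' : e m < t := ht
      have hset : {ω | t < g ω} = {ω | t < e (y (T ω))} := by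
        ext ω
        simp only [hgdef, Set.mem_setOf_eq, lt_max_iff]
        constructor
        · rintro (h | h)
          · exact h
          · linarith
        · exact Or.inl
      rw [hset, ← ENNReal.ofReal_toReal (measure_ne_top P _)]
      exact ENNReal.ofReal_le_ofReal (tail_f t ht')
    have hint : IntegrableOn (fun t : ℝ => C * (e m) ^ (1 + δ) * t ^ (-(1 + δ)))
        (Set.Ioi (e m)) :=
      (integrableOn_Ioi_rpow_of_lt (by linarith : -(1 + δ) < -1) hem).const_mul _
    calc ∫⁻ t in Set.Ioi (e m), P {ω | t < g ω}
        ≤ ∫⁻ t in Set.Ioi (e m), ENNReal.ofReal (C * (e m) ^ (1 + δ) * t ^ (-(1 + δ))) :=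
          setLIntegral_mono' measurableSet_Ioi step
      _ = ENNReal.ofReal (∫ t in Set.Ioi (e m), C * (e m) ^ (1 + δ) * t ^ (-(1 + δ))) := by
          rw [← ofReal_integral_eq_lintegral_ofReal hint ?_]
          filter_upwards [ae_restrict_mem measurableSet_Ioi] with t ht
          have htp : 0 < t := lt_trans hem ht
          positivity
      _ = ENNReal.ofReal (e m * (C / δ)) := by
          congr 1
          rw [integral_const_mul, integral_Ioi_rpow_of_lt (by linarith) hem]
          have ha : -(1 + δ) + 1 = -δ := by ring
          rw [ha]
          have hme : (e m) ^ (1 + δ) * (e m) ^ (-δ : ℝ) = e m := by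
            rw [← Real.rpow_add hem]
            norm_num
          calc C * (e m) ^ (1 + δ) * (-(e m) ^ (-δ : ℝ) / (-δ))
              = C * ((e m) ^ (1 + δ) * (e m) ^ (-δ : ℝ)) / δ := by
                field_simp
            _ = e m * (C / δ) := by rw [hme]; ring
  calc ∫⁻ ω, ENNReal.ofReal (e (y (T ω))) ∂P
      = ∫⁻ ω, ENNReal.ofReal (g ω) ∂P := by
        exact lintegral_congr hof
    _ = (∫⁻ t in Set.Ioc 0 (e m), P {ω | t < g ω})
        + ∫⁻ t in Set.Ioi (e m), P {ω | t < g ω} := by rw [layer, hsplit]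
    _ ≤ ENNReal.ofReal (e m) + ENNReal.ofReal (e m * (C / δ)) := add_le_add hb1 hb2
    _ = ENNReal.ofReal (e m * (1 + C / δ)) := by
        rw [← ENNReal.ofReal_add hem.le (by positivity)]
        congr 1
        ring
end

section
/- Suppose e is moderate with constants (γ, θ): e(t₂)/e(t₁) ≤ γ(t₂/t₁)^θ for 0 < t₁ < t₂, and T ≥ 0 is a random variable satisfying P(T ≥ t) ≤ A (c t / n)^{-kσ/2} for all t ≥ n, where n > 0, c > 0, σ > 0 are constants and k is an integer with kσ/2 > θ. Then E[e(T)] ≤ e(n) + C e(n) / δ where δ = kσ/(2θ) − 1 and C depends only on A, γ, c, k, σ, θ. -/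
open MeasureTheory

/-- If `e` is moderate with constants `(γ, θ)` and `T ≥ 0` satisfies the tail bound
`P(T ≥ t) ≤ A (c t / n)^{-kσ/2}` for `t ≥ n`, where `kσ/2 > θ`, then
`E[e(T)] ≤ e(n) + C e(n)/δ` with `δ = kσ/(2θ) − 1` and `C` depending only on
`A, γ, c, k, σ, θ`. -/
theorem moment_bound_of_polynomial_tail
    (A γ c σ θ : ℝ) (hA : 0 ≤ A) (hγ : 0 < γ) (hc : 0 < c) (hσ : 0 < σ) (hθ : 0 < θ)
    (k : ℕ) (hk : 2 * θ < (k : ℝ) * σ) :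
    ∃ C > (0 : ℝ),
      ∀ {Ω : Type} [MeasurableSpace Ω] (P : Measure Ω), IsProbabilityMeasure P →
      ∀ (e : ℝ → ℝ), Monotone e → (∀ t > 0, 0 < e t) →
        (∀ t₁ t₂ : ℝ, 0 < t₁ → t₁ < t₂ → e t₂ / e t₁ ≤ γ * (t₂ / t₁) ^ θ) →
      ∀ (n : ℝ), 0 < n →
      ∀ (T : Ω → ℝ), Measurable T → (∀ ω, 0 ≤ T ω) →
        (∀ t : ℝ, n ≤ t →
          (P {ω | t ≤ T ω}).toReal ≤ A * (c * t / n) ^ (-(k : ℝ) * σ / 2)) →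
        ∫⁻ ω, ENNReal.ofReal (e (T ω)) ∂P ≤
          ENNReal.ofReal (e n + C * e n / ((k : ℝ) * σ / (2 * θ) - 1)) := by
  set p : ℝ := (k : ℝ) * σ / 2 with hp_def
  have hpθ : θ < p := by rw [hp_def]; linarith
  have hp0 : 0 < p := hθ.trans hpθ
  set q : ℝ := p / θ with hq_def
  have hq1 : 1 < q := (one_lt_div hθ).2 hpθ
  have hq1' : (0:ℝ) < q - 1 := sub_pos.mpr hq1
  refine ⟨γ * (q - 1) + γ * A * c ^ (-p),
    add_pos_of_pos_of_nonneg (mul_pos hγ hq1') (by positivity), ?_⟩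
  intro Ω _ P hP e he_mono he_pos he_mod n hn T hT hT0 htail
  set f : Ω → ℝ := fun ω => (max (T ω) n / n) ^ θ with hf_def
  have hf_meas : Measurable f := by fun_prop
  have hf_nn : ∀ ω, 0 ≤ f ω := fun ω =>
    Real.rpow_nonneg (div_nonneg (le_trans (hT0 ω) (le_max_left _ _)) hn.le) θ
  have hen : 0 < e n := he_pos n hn
  -- pointwise bound
  have hpt : ∀ ω, e (T ω) ≤ e n + γ * e n * f ω := by
    intro ω
    by_cases h : T ω ≤ n
    · have hf1 : f ω = 1 := by
        rw [hf_def]; simp only [max_eq_right h, div_self hn.ne', Real.one_rpow]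
      rw [hf1, mul_one]
      nlinarith [he_mono h]
    · push_neg at h
      have hmax : max (T ω) n = T ω := max_eq_left h.le
      have := he_mod n (T ω) hn h
      rw [div_le_iff₀ hen] at this
      have hfω : f ω = (T ω / n) ^ θ := by simp only [hf_def]; rw [hmax]
      rw [hfω]
      nlinarith [this]
  -- layer cake for f
  have hlayer : ∫⁻ ω, ENNReal.ofReal (f ω) ∂P
      = ∫⁻ t in Set.Ioi (0:ℝ), P {ω | t < f ω} :=
    lintegral_eq_lintegral_meas_lt P (Filter.Eventually.of_forall hf_nn)
      hf_meas.aemeasurable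
  -- split the t-integral at 1
  have hsplit : ∫⁻ t in Set.Ioi (0:ℝ), P {ω | t < f ω}
      = (∫⁻ t in Set.Ioc (0:ℝ) 1, P {ω | t < f ω})
        + ∫⁻ t in Set.Ioi (1:ℝ), P {ω | t < f ω} := by
    rw [← Set.Ioc_union_Ioi_eq_Ioi (zero_le_one (α := ℝ)),
      lintegral_union measurableSet_Ioi Set.Ioc_disjoint_Ioi_same]
  -- first piece ≤ 1
  have h1 : (∫⁻ t in Set.Ioc (0:ℝ) 1, P {ω | t < f ω}) ≤ 1 := by
    calc (∫⁻ t in Set.Ioc (0:ℝ) 1, P {ω | t < f ω})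
        ≤ ∫⁻ _ in Set.Ioc (0:ℝ) 1, 1 :=
          setLIntegral_mono measurable_const fun t _ => prob_le_one
      _ = 1 := by simp [Real.volume_Ioc]
  -- tail bound for the second piece
  have htail2 : ∀ t ∈ Set.Ioi (1:ℝ),
      P {ω | t < f ω} ≤ ENNReal.ofReal (A * c ^ (-p) * t ^ (-q)) := by
    intro t ht
    have ht1 : (1:ℝ) < t := ht
    have ht0 : (0:ℝ) < t := lt_trans one_pos ht1
    set s : ℝ := n * t ^ (1/θ) with hs_def
    have hts1 : (1:ℝ) ≤ t ^ (1/θ) := Real.one_le_rpow ht1.le (by positivity)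
    have hns : n ≤ s := by
      rw [hs_def]; nlinarith
    have hsub : {ω | t < f ω} ⊆ {ω | s ≤ T ω} := by
      intro ω hω
      simp only [Set.mem_setOf_eq] at hω ⊢
      set x : ℝ := max (T ω) n / n with hx_def
      have hx0 : 0 < x := div_pos (lt_of_lt_of_le hn (le_max_right _ _)) hn
      have hlt : t ^ (1/θ) < x := by
        have h2 : t ^ (1/θ) < (x ^ θ) ^ (1/θ) :=
          Real.rpow_lt_rpow ht0.le hω (by positivity)
        rwa [← Real.rpow_mul hx0.le, mul_one_div, div_self hθ.ne',
          Real.rpow_one] at h2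
      have hsmax : s < max (T ω) n := by
        rw [hs_def]
        calc n * t ^ (1/θ) < n * x := by nlinarith
          _ = max (T ω) n := by rw [hx_def]; field_simp
      rcases max_cases (T ω) n with ⟨hm, _⟩ | ⟨hm, _⟩
      · rw [hm] at hsmax; exact hsmax.le
      · rw [hm] at hsmax; linarith
    have hmeas_ne : P {ω | s ≤ T ω} ≠ ⊤ := measure_ne_top _ _
    calc P {ω | t < f ω} ≤ P {ω | s ≤ T ω} := measure_mono hsub
      _ = ENNReal.ofReal ((P {ω | s ≤ T ω}).toReal) := (ENNReal.ofReal_toReal hmeas_ne).symm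
      _ ≤ ENNReal.ofReal (A * (c * s / n) ^ (-p)) := ENNReal.ofReal_le_ofReal (by
            have := htail s hns
            rw [hp_def]
            convert this using 3
            ring)
      _ = ENNReal.ofReal (A * c ^ (-p) * t ^ (-q)) := by
            congr 1
            have hcs : c * s / n = c * t ^ (1/θ) := by
              rw [hs_def]; field_simp
            rw [hcs, Real.mul_rpow hc.le (Real.rpow_nonneg ht0.le _),
              ← Real.rpow_mul ht0.le, mul_assoc]
            congr 2
            rw [hq_def]; field_simp
  -- integral of the tail bound
  have hint : IntegrableOn (fun t : ℝ => A * c ^ (-p) * t ^ (-q)) (Set.Ioi (1:ℝ)) :=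
    (integrableOn_Ioi_rpow_of_lt (by linarith : -q < -1) one_pos).const_mul _
  have hval : ∫ t in Set.Ioi (1:ℝ), A * c ^ (-p) * t ^ (-q)
      = A * c ^ (-p) * (1 / (q - 1)) := by
    rw [integral_const_mul, integral_Ioi_rpow_of_lt (by linarith) one_pos,
      Real.one_rpow]
    congr 1
    field_simp
    rw [show -q + 1 = -(q - 1) by ring, div_neg, neg_neg, div_self hq1'.ne']
  have h2 : (∫⁻ t in Set.Ioi (1:ℝ), P {ω | t < f ω})
      ≤ ENNReal.ofReal (A * c ^ (-p) * (1 / (q - 1))) := by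
    calc (∫⁻ t in Set.Ioi (1:ℝ), P {ω | t < f ω})
        ≤ ∫⁻ t in Set.Ioi (1:ℝ), ENNReal.ofReal (A * c ^ (-p) * t ^ (-q)) :=
          setLIntegral_mono (by fun_prop) htail2
      _ = ENNReal.ofReal (∫ t in Set.Ioi (1:ℝ), A * c ^ (-p) * t ^ (-q)) :=
          (ofReal_integral_eq_lintegral_ofReal hint
            ((ae_restrict_iff' measurableSet_Ioi).2 (Filter.Eventually.of_forall
              fun t ht => by
                have ht0 : (0:ℝ) < t := lt_trans one_pos ht
                positivity))).symm
      _ = ENNReal.ofReal (A * c ^ (-p) * (1 / (q - 1))) := by rw [hval]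
  -- bound on ∫⁻ f
  have hIf : ∫⁻ ω, ENNReal.ofReal (f ω) ∂P
      ≤ 1 + ENNReal.ofReal (A * c ^ (-p) * (1 / (q - 1))) := by
    rw [hlayer, hsplit]; exact add_le_add h1 h2
  -- assemble
  have hfm' : Measurable fun ω => ENNReal.ofReal (f ω) := by fun_prop
  calc ∫⁻ ω, ENNReal.ofReal (e (T ω)) ∂P
      ≤ ∫⁻ ω, ENNReal.ofReal (e n + γ * e n * f ω) ∂P :=
        lintegral_mono fun ω => ENNReal.ofReal_le_ofReal (hpt ω)
    _ = ENNReal.ofReal (e n) + ENNReal.ofReal (γ * e n) * ∫⁻ ω, ENNReal.ofReal (f ω) ∂P := by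
        have heq : ∀ ω, ENNReal.ofReal (e n + γ * e n * f ω)
            = ENNReal.ofReal (e n) + ENNReal.ofReal (γ * e n) * ENNReal.ofReal (f ω) :=
          fun ω => by
            rw [ENNReal.ofReal_add hen.le (mul_nonneg (by positivity) (hf_nn ω)),
              ENNReal.ofReal_mul (by positivity)]
        simp_rw [heq]
        rw [lintegral_add_left measurable_const, lintegral_const_mul _ hfm',
          lintegral_const, measure_univ, mul_one]
    _ ≤ ENNReal.ofReal (e n) + ENNReal.ofReal (γ * e n)
          * (1 + ENNReal.ofReal (A * c ^ (-p) * (1 / (q - 1)))) :=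
        add_le_add_right (mul_le_mul_right hIf _) _
    _ = ENNReal.ofReal (e n + γ * e n * (1 + A * c ^ (-p) * (1 / (q - 1)))) := by
        rw [← ENNReal.ofReal_one, ← ENNReal.ofReal_add zero_le_one (by positivity),
          ← ENNReal.ofReal_mul (by positivity), ← ENNReal.ofReal_add hen.le (by positivity)]
    _ ≤ ENNReal.ofReal (e n + (γ * (q - 1) + γ * A * c ^ (-p)) * e n
          / ((k : ℝ) * σ / (2 * θ) - 1)) := by
        apply ENNReal.ofReal_le_ofReal
        have hqeq : (k : ℝ) * σ / (2 * θ) - 1 = q - 1 := by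
          rw [hq_def, hp_def]; field_simp
        rw [hqeq]
        have heq2 : γ * e n * (1 + A * c ^ (-p) * (1 / (q - 1)))
            = (γ * (q - 1) + γ * A * c ^ (-p)) * e n / (q - 1) := by
          field_simp
        linarith [heq2.le]
end
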